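/- Let 0 < α₁ < α₂ < 1 and c > 0, and for r ∈ (0,c) define w(r) = ((α₂ − 1)c − (α₁ − 1)r)/(c − r). Then there exists r ∈ (0,c) such that −(1/π) · r^{w(r)} · sin(π w(r)) < 0. In particular, the spectral distribution K_α^Φ(r) = −(1/π) r^{w(r)} sin(π w(r)) of the kernel Φ_α(s) = s^{sA(s)−1} associated with the exponential transition α(t) = α₂ + (α₁ − α₂)e^{−ct} is not nonnegative on (0,∞). -/

import Mathlib

open Real

theorem spectral_distribution_not_nonnegative
    (α₁ α₂ c : ℝ)
    (h1 : 0 < α₁) (h12 : α₁ < α₂) (h2 : α₂ < 1) (hc : 0 < c) :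
    ∃ r : ℝ, 0 < r ∧ r < c ∧
      -(1 / Real.pi)
        * r ^ (((α₂ - 1) * c - (α₁ - 1) * r) / (c - r))
        * Real.sin (Real.pi * (((α₂ - 1) * c - (α₁ - 1) * r) / (c - r))) < 0 := by
  have hd1 : (0:ℝ) < 3 - 2 * α₁ := by linarith
  have hd2 : (0:ℝ) < 3 - 2 * α₂ := by linarith
  set r : ℝ := c * (3 - 2 * α₂) / (3 - 2 * α₁) with hr
  have hr0 : 0 < r := by positivity
  have hrc : r < c := by
    rw [hr, div_lt_iff₀ hd1]
    nlinarith
  have hcr : c - r ≠ 0 := by linarith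
  have hw : ((α₂ - 1) * c - (α₁ - 1) * r) / (c - r) = 1 / 2 := by
    rw [div_eq_div_iff hcr (by norm_num : (2:ℝ) ≠ 0)]
    rw [hr]
    have h3 := div_mul_cancel₀ (c * (3 - 2 * α₂)) hd1.ne'
    linear_combination h3
  refine ⟨r, hr0, hrc, ?_⟩
  rw [hw]
  have : Real.sin (Real.pi * (1 / 2)) = 1 := by
    rw [mul_one_div, Real.sin_pi_div_two]
  rw [this, mul_one]
  have hπ : 0 < 1 / Real.pi := by positivity
  have hpow : (0:ℝ) < r ^ ((1:ℝ) / 2) := Real.rpow_pos_of_pos hr0 _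
  nlinarith
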